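/- In the parallel coupon collector problem with N ≥ 2 coupon types and C ≥ 1 collectors, setting t₀ = log(C/log 2) / log(N/(N−1)), every natural number t with t ≤ t₀ satisfies P(T(N, C) ≥ t) ≥ 1/2; consequently E[T(N, C)] ≥ t₀/2 = log(C/log 2) / (2·log(N/(N−1))). -/

import Mathlib

open MeasureTheory ProbabilityTheory
open scoped ENNReal

/-- The cover time of the parallel coupon collector problem: the first round
`t` by which each of the `C` collectors has collected each of the `N` coupon
types (`ω s c` is the coupon type picked by collector `c` in round `s`). -/
noncomputable def coverTime {N C : ℕ} (ω : ℕ → Fin C → Fin N) : ℕ :=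
  sInf {t | ∀ c : Fin C, ∀ x : Fin N, ∃ s < t, ω s c = x}

/-- `μ` is the law of the picks in the parallel coupon collector problem with
`N` coupon types and `C` collectors: the picks of different rounds are
independent, and in each round the joint pick of the `C` collectors is uniform
among all `N ^ C` possibilities (equivalently, each collector independently
picks a coupon type uniformly at random). -/
def IsCouponMeasure {N C : ℕ} (μ : MeasureTheory.Measure (ℕ → Fin C → Fin N)) : Prop :=
  MeasureTheory.IsProbabilityMeasure μ ∧
    ProbabilityTheory.iIndepFun (fun t ω => ω t) μ ∧
    ∀ t : ℕ, ∀ f : Fin C → Fin N, μ {ω | ω t = f} = ((N : ENNReal) ^ C)⁻¹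

section CouponAux

variable {N C : ℕ}

lemma meas_atom (μ : Measure (ℕ → Fin C → Fin N)) (hμ : IsCouponMeasure μ)
    (u : ℕ) (f : Fin u → Fin C → Fin N) :
    μ {ω | ∀ s : Fin u, ω s = f s} = (((N : ℝ≥0∞) ^ C)⁻¹) ^ u := by
  classical
  set B : ℕ → Set (Fin C → Fin N) := fun i =>
    if h : i < u then {f ⟨i, h⟩} else Set.univ with hB
  have hset : {ω : ℕ → Fin C → Fin N | ∀ s : Fin u, ω s = f s}
      = ⋂ i ∈ Finset.range u, (fun ω : ℕ → Fin C → Fin N => ω i) ⁻¹' B i := by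
    ext ω
    simp only [Set.mem_setOf_eq, Set.mem_iInter, Finset.mem_range, Set.mem_preimage, hB]
    constructor
    · intro h i hi
      rw [dif_pos hi]
      exact h ⟨i, hi⟩
    · intro h s
      have := h s.1 s.2
      rwa [dif_pos s.2] at this
  have hBm : ∀ i, MeasurableSet (B i) := by
    intro i
    by_cases h : i < u
    · simp only [hB, dif_pos h]; exact measurableSet_singleton _
    · simp only [hB, dif_neg h]; exact MeasurableSet.univ
  rw [hset, hμ.2.1.measure_inter_preimage_eq_mul (Finset.range u) (fun i _ => hBm i)]
  have : ∀ i ∈ Finset.range u,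
      μ ((fun ω : ℕ → Fin C → Fin N => ω i) ⁻¹' B i) = ((N : ℝ≥0∞) ^ C)⁻¹ := by
    intro i hi
    rw [Finset.mem_range] at hi
    simp only [hB, dif_pos hi]
    have := hμ.2.2 i (f ⟨i, hi⟩)
    convert this using 2
    rfl
  rw [Finset.prod_congr rfl this, Finset.prod_const, Finset.card_range]

lemma atom_measurable (u : ℕ) (f : Fin u → Fin C → Fin N) :
    MeasurableSet {ω : ℕ → Fin C → Fin N | ∀ s : Fin u, ω s = f s} := by
  have : {ω : ℕ → Fin C → Fin N | ∀ s : Fin u, ω s = f s}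
      = ⋂ s : Fin u, (fun ω : ℕ → Fin C → Fin N => ω s) ⁻¹' {f s} := by
    ext ω; simp [Set.mem_iInter]
  rw [this]
  exact MeasurableSet.iInter fun s =>
    (measurable_pi_apply (s : ℕ)) (measurableSet_singleton _)

lemma meas_cylinder (μ : Measure (ℕ → Fin C → Fin N)) (hμ : IsCouponMeasure μ)
    (u : ℕ) (P : (Fin u → Fin C → Fin N) → Prop) [DecidablePred P] :
    μ {ω | P (fun s : Fin u => ω s)} =
      (Finset.univ.filter P).card * (((N : ℝ≥0∞) ^ C)⁻¹) ^ u := by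
  classical
  have hset : {ω : ℕ → Fin C → Fin N | P (fun s : Fin u => ω s)} =
      ⋃ f ∈ Finset.univ.filter P,
        {ω : ℕ → Fin C → Fin N | ∀ s : Fin u, ω s = f s} := by
    ext ω
    simp only [Set.mem_setOf_eq, Set.mem_iUnion, Finset.mem_filter, Finset.mem_univ, true_and]
    constructor
    · intro h; exact ⟨fun s => ω s, h, fun s => rfl⟩
    · rintro ⟨f, hf, hfs⟩
      have : (fun s : Fin u => ω (s : ℕ)) = f := funext hfs
      rwa [this]
  rw [hset, measure_biUnion_finset ?disj fun f _ => atom_measurable u f]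
  · rw [Finset.sum_congr rfl (fun f _ => meas_atom μ hμ u f), Finset.sum_const,
      nsmul_eq_mul]
  case disj =>
    intro f hf g hg hfg
    rw [Function.onFun, Set.disjoint_left]
    intro ω hωf hωg
    exact hfg (funext fun s => (hωf s).symm.trans (hωg s))

lemma card_miss (u : ℕ) (hN : 1 ≤ N) (x0 : Fin N) :
    (Finset.univ.filter (fun h : Fin u → Fin N => ∀ s, h s ≠ x0)).card = (N - 1) ^ u := by
  classical
  rw [← Fintype.card_subtype]
  have e : {h : Fin u → Fin N // ∀ s, h s ≠ x0} ≃ (Fin u → {y : Fin N // y ≠ x0}) :=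
    ⟨fun h s => ⟨h.1 s, h.2 s⟩, fun g => ⟨fun s => (g s).1, fun s => (g s).2⟩,
      fun h => rfl, fun g => rfl⟩
  rw [Fintype.card_congr e, Fintype.card_fun, Fintype.card_fin]
  congr 1
  have : Fintype.card {y : Fin N // y ≠ x0}
      = Fintype.card (Fin N) - Fintype.card {y : Fin N // y = x0} := by
    simp only [ne_eq]
    exact Fintype.card_subtype_compl _
  rw [this, Fintype.card_fin, Fintype.card_subtype_eq]

lemma card_hit_le (u : ℕ) (hN : 1 ≤ N) :
    (Finset.univ.filter (fun h : Fin u → Fin N => ∀ x, ∃ s, h s = x)).card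
      ≤ N ^ u - (N - 1) ^ u := by
  classical
  have x0 : Fin N := ⟨0, hN⟩
  have hsub : (Finset.univ.filter (fun h : Fin u → Fin N => ∀ x, ∃ s, h s = x))
      ⊆ (Finset.univ.filter (fun h : Fin u → Fin N => ¬ ∀ s, h s ≠ x0)) := by
    intro h hh
    rw [Finset.mem_filter] at hh ⊢
    refine ⟨hh.1, fun hc => ?_⟩
    obtain ⟨s, hs⟩ := hh.2 x0
    exact hc s hs
  refine (Finset.card_le_card hsub).trans ?_
  have key := Finset.card_filter_add_card_filter_not
    (s := (Finset.univ : Finset (Fin u → Fin N))) (p := fun h => ∀ s, h s ≠ x0)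
  have hcard : (Finset.univ : Finset (Fin u → Fin N)).card = N ^ u := by
    rw [Finset.card_univ, Fintype.card_fun, Fintype.card_fin, Fintype.card_fin]
  rw [card_miss u hN x0, hcard] at key
  beta_reduce at key
  exact le_of_eq (Nat.eq_sub_of_add_eq' key)

lemma card_hit_ge (u : ℕ) (hN : 1 ≤ N) :
    N ^ u - N * (N - 1) ^ u
      ≤ (Finset.univ.filter (fun h : Fin u → Fin N => ∀ x, ∃ s, h s = x)).card := by
  classical
  have key := Finset.card_filter_add_card_filter_not
    (s := (Finset.univ : Finset (Fin u → Fin N))) (p := fun h => ∀ x, ∃ s, h s = x)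
  have hcard : (Finset.univ : Finset (Fin u → Fin N)).card = N ^ u := by
    rw [Finset.card_univ, Fintype.card_fun, Fintype.card_fin, Fintype.card_fin]
  rw [hcard] at key
  have hneg : (Finset.filter (fun h : Fin u → Fin N => ¬∀ x, ∃ s, h s = x)
      Finset.univ).card ≤ N * (N - 1) ^ u := by
    have hsub : Finset.filter (fun h : Fin u → Fin N => ¬∀ x, ∃ s, h s = x) Finset.univ
        ⊆ Finset.univ.biUnion (fun x0 : Fin N =>
            Finset.filter (fun h : Fin u → Fin N => ∀ s, h s ≠ x0) Finset.univ) := by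
      intro h hh
      rw [Finset.mem_filter] at hh
      push_neg at hh
      obtain ⟨x0, hx0⟩ := hh.2
      rw [Finset.mem_biUnion]
      exact ⟨x0, Finset.mem_univ _, Finset.mem_filter.2 ⟨Finset.mem_univ _, hx0⟩⟩
    refine (Finset.card_le_card hsub).trans (Finset.card_biUnion_le.trans ?_)
    calc ∑ x0 : Fin N, (Finset.filter (fun h : Fin u → Fin N => ∀ s, h s ≠ x0)
          Finset.univ).card
        = ∑ _x0 : Fin N, (N - 1) ^ u := by
          exact Finset.sum_congr rfl fun x0 _ => card_miss u hN x0
      _ = N * (N - 1) ^ u := by rw [Finset.sum_const, Finset.card_univ,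
          Fintype.card_fin, smul_eq_mul]
      _ ≤ N * (N - 1) ^ u := le_rfl
  rw [Nat.eq_sub_of_add_eq key]
  exact Nat.sub_le_sub_left hneg _

lemma card_cov (u : ℕ) :
    (Finset.univ.filter (fun f : Fin u → Fin C → Fin N =>
        ∀ (c : Fin C) (x : Fin N), ∃ s, f s c = x)).card
    = (Finset.univ.filter (fun h : Fin u → Fin N => ∀ x, ∃ s, h s = x)).card ^ C := by
  classical
  rw [← Fintype.card_subtype, ← Fintype.card_subtype]
  have e : {f : Fin u → Fin C → Fin N // ∀ (c : Fin C) (x : Fin N), ∃ s, f s c = x}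
      ≃ (Fin C → {h : Fin u → Fin N // ∀ x, ∃ s, h s = x}) :=
    ⟨fun f c => ⟨fun s => f.1 s c, fun x => f.2 c x⟩,
     fun g => ⟨fun s c => (g c).1 s, fun c x => (g c).2 x⟩,
     fun f => rfl, fun g => rfl⟩
  rw [Fintype.card_congr e, Fintype.card_fun, Fintype.card_fin]

lemma nat_cast_sub_ge (a b : ℕ) : (a:ℝ) - b ≤ ((a - b : ℕ):ℝ) := by
  rcases le_total b a with h|h
  · rw [Nat.cast_sub h]
  · rw [Nat.sub_eq_zero_of_le h, Nat.cast_zero]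
    have : (a:ℝ) ≤ b := Nat.cast_le.mpr h
    linarith

lemma real_key (hN : 2 ≤ N) (hC : 1 ≤ C) (u : ℕ)
    (hu : (u:ℝ) ≤ Real.log ((C:ℝ) / Real.log 2) / Real.log ((N:ℝ) / ((N:ℝ) - 1))) :
    (((N ^ u - (N - 1) ^ u : ℕ) : ℝ)) ^ C * ((((N:ℝ) ^ u) ^ C))⁻¹ ≤ 1 / 2 := by
  have hn : (2:ℝ) ≤ (N:ℝ) := by exact_mod_cast hN
  have hn1 : (0:ℝ) < (N:ℝ) - 1 := by linarith
  have hn0 : (0:ℝ) < (N:ℝ) := by linarith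
  set r : ℝ := ((N:ℝ) - 1) / N with hr
  have hr0 : 0 < r := div_pos hn1 hn0
  have hr1 : r < 1 := (div_lt_one hn0).2 (by linarith)
  have hL : 0 < Real.log ((N:ℝ) / ((N:ℝ) - 1)) :=
    Real.log_pos ((one_lt_div hn1).2 (by linarith))
  have hlog2 : 0 < Real.log 2 := Real.log_pos one_lt_two
  have hCpos : (0:ℝ) < C := by exact_mod_cast hC
  have hmul : (u:ℝ) * Real.log ((N:ℝ)/((N:ℝ)-1)) ≤ Real.log ((C:ℝ)/Real.log 2) :=
    (le_div_iff₀ hL).1 hu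
  have hexp : ((N:ℝ)/((N:ℝ)-1)) ^ u ≤ (C:ℝ) / Real.log 2 := by
    have h2 := Real.exp_le_exp.2 hmul
    rw [Real.exp_log (by positivity)] at h2
    calc ((N:ℝ)/((N:ℝ)-1)) ^ u
        = Real.exp (Real.log ((N:ℝ)/((N:ℝ)-1))) ^ u := by
          rw [Real.exp_log (by positivity)]
      _ = Real.exp ((u:ℝ) * Real.log ((N:ℝ)/((N:ℝ)-1))) := (Real.exp_nat_mul _ u).symm
      _ ≤ _ := h2
  have hpow_pos : 0 < ((N:ℝ)/((N:ℝ)-1)) ^ u := by positivity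
  have hq : Real.log 2 ≤ (C:ℝ) * r ^ u := by
    have hinv : r ^ u = (((N:ℝ)/((N:ℝ)-1)) ^ u)⁻¹ := by
      rw [hr, ← inv_div ((N:ℝ)) (((N:ℝ)-1)), inv_pow]
    have heq : (C:ℝ) * ((C:ℝ)/Real.log 2)⁻¹ = Real.log 2 := by
      field_simp
    rw [hinv]
    calc Real.log 2 = (C:ℝ) * ((C:ℝ)/Real.log 2)⁻¹ := heq.symm
      _ ≤ (C:ℝ) * (((N:ℝ)/((N:ℝ)-1)) ^ u)⁻¹ :=
          mul_le_mul_of_nonneg_left (inv_anti₀ hpow_pos hexp) hCpos.le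
  have hle : (N - 1) ^ u ≤ N ^ u := Nat.pow_le_pow_left (Nat.sub_le _ _) u
  have h1 : ((N - 1 : ℕ):ℝ) = (N:ℝ) - 1 := by
    have h1' : 1 ≤ N := by omega
    push_cast [Nat.cast_sub h1']
    ring
  have hcast : ((N ^ u - (N - 1) ^ u : ℕ) : ℝ) = (N:ℝ)^u - ((N:ℝ) - 1)^u := by
    rw [Nat.cast_sub hle, Nat.cast_pow, Nat.cast_pow, h1]
  rw [hcast]
  have hfact : (N:ℝ)^u - ((N:ℝ)-1)^u = (N:ℝ)^u * (1 - r^u) := by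
    rw [hr, div_pow]
    field_simp
  rw [hfact, mul_pow]
  have hru1 : r ^ u ≤ 1 := pow_le_one₀ hr0.le hr1.le
  have h1r : 0 ≤ 1 - r^u := by linarith
  have hexp2 : (1 - r^u)^C ≤ 1/2 := by
    have hb : 1 - r^u ≤ Real.exp (-(r^u)) := by
      have := Real.add_one_le_exp (-(r^u)); linarith
    calc (1 - r^u)^C ≤ Real.exp (-(r^u)) ^ C := pow_le_pow_left₀ h1r hb C
      _ = Real.exp ((C:ℝ) * (-(r^u))) := (Real.exp_nat_mul _ C).symm
      _ ≤ Real.exp (-Real.log 2) := Real.exp_le_exp.2 (by nlinarith)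
      _ = 1/2 := by rw [Real.exp_neg, Real.exp_log two_pos]; norm_num
  calc ((N:ℝ)^u)^C * (1 - r^u)^C * ((((N:ℝ)^u)^C))⁻¹
      = (1 - r^u)^C * (((N:ℝ)^u)^C * ((((N:ℝ)^u)^C))⁻¹) := by ring
    _ = (1 - r^u)^C := by
        rw [mul_inv_cancel₀ (by positivity), mul_one]
    _ ≤ 1/2 := hexp2

lemma enn_cast (hN : 1 ≤ N) (k u : ℕ) :
    (↑(k ^ C) : ℝ≥0∞) * (((N:ℝ≥0∞) ^ C)⁻¹) ^ u
      = ENNReal.ofReal ((k:ℝ) ^ C * ((((N:ℝ) ^ u) ^ C))⁻¹) := by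
  have hNpos : (0:ℝ) < N := by exact_mod_cast hN
  rw [ENNReal.ofReal_mul (by positivity), ENNReal.ofReal_inv_of_pos (by positivity)]
  congr 1
  · rw [show ((k:ℝ)) ^ C = ((k ^ C : ℕ) : ℝ) by push_cast; ring, ENNReal.ofReal_natCast]
  · rw [show (((N:ℝ) ^ u) ^ C) = ((N ^ (u * C) : ℕ) : ℝ) by push_cast; rw [pow_mul],
      ENNReal.ofReal_natCast]
    push_cast
    rw [← ENNReal.inv_pow, ← pow_mul, mul_comm C u]

lemma covset_measurable (u : ℕ) :
    MeasurableSet {ω : ℕ → Fin C → Fin N | ∀ c x, ∃ s < u, ω s c = x} := by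
  have hset : {ω : ℕ → Fin C → Fin N | ∀ c x, ∃ s < u, ω s c = x}
      = ⋂ c : Fin C, ⋂ x : Fin N, ⋃ s : Fin u,
          (fun ω : ℕ → Fin C → Fin N => ω s c) ⁻¹' {x} := by
    ext ω
    simp only [Set.mem_setOf_eq, Set.mem_iInter, Set.mem_iUnion, Set.mem_preimage,
      Set.mem_singleton_iff]
    constructor
    · intro h c x; obtain ⟨s, hs, h2⟩ := h c x; exact ⟨⟨s, hs⟩, h2⟩
    · intro h c x; obtain ⟨s, h2⟩ := h c x; exact ⟨s, s.2, h2⟩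
  rw [hset]
  refine MeasurableSet.iInter fun c => MeasurableSet.iInter fun x =>
    MeasurableSet.iUnion fun s => ?_
  exact ((measurable_pi_apply c).comp (measurable_pi_apply (s:ℕ)))
    (measurableSet_singleton x)

lemma meas_covset (μ : Measure (ℕ → Fin C → Fin N)) (hμ : IsCouponMeasure μ) (u : ℕ) :
    μ {ω | ∀ c x, ∃ s < u, ω s c = x}
      = (↑(((Finset.univ.filter
          (fun h : Fin u → Fin N => ∀ x, ∃ s, h s = x)).card) ^ C) : ℝ≥0∞)
        * (((N:ℝ≥0∞) ^ C)⁻¹) ^ u := by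
  classical
  have hset : {ω : ℕ → Fin C → Fin N | ∀ c x, ∃ s < u, ω s c = x}
      = {ω : ℕ → Fin C → Fin N |
          (fun f : Fin u → Fin C → Fin N => ∀ c x, ∃ s, f s c = x) (fun s : Fin u => ω s)} := by
    ext ω
    simp only [Set.mem_setOf_eq]
    constructor
    · intro h c x; obtain ⟨s, hs, h2⟩ := h c x; exact ⟨⟨s, hs⟩, h2⟩
    · intro h c x; obtain ⟨s, h2⟩ := h c x; exact ⟨s, s.2, h2⟩
  rw [hset, meas_cylinder μ hμ u
    (fun f : Fin u → Fin C → Fin N => ∀ c x, ∃ s, f s c = x), card_cov]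

lemma cast_pred (hN : 1 ≤ N) : ((N - 1 : ℕ):ℝ) = (N:ℝ) - 1 := by
  push_cast [Nat.cast_sub hN]
  ring

lemma meas_cov_le (μ : Measure (ℕ → Fin C → Fin N)) (hμ : IsCouponMeasure μ)
    (hN : 2 ≤ N) (hC : 1 ≤ C) (u : ℕ)
    (hu : (u:ℝ) ≤ Real.log ((C:ℝ) / Real.log 2) / Real.log ((N:ℝ) / ((N:ℝ) - 1))) :
    μ {ω | ∀ c x, ∃ s < u, ω s c = x} ≤ ENNReal.ofReal (1/2) := by
  rw [meas_covset μ hμ u, enn_cast (by omega) _ u]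
  refine ENNReal.ofReal_le_ofReal (le_trans ?_ (real_key hN hC u hu))
  have hk : (Finset.univ.filter (fun h : Fin u → Fin N => ∀ x, ∃ s, h s = x)).card
      ≤ N ^ u - (N - 1) ^ u := card_hit_le u (by omega)
  have hkc : ((Finset.univ.filter (fun h : Fin u → Fin N => ∀ x, ∃ s, h s = x)).card : ℝ) ^ C
      ≤ ((N ^ u - (N - 1) ^ u : ℕ) : ℝ) ^ C :=
    pow_le_pow_left₀ (by positivity) (Nat.cast_le.2 hk) C
  exact mul_le_mul_of_nonneg_right hkc (by positivity)

lemma meas_compl_le (μ : Measure (ℕ → Fin C → Fin N)) (hμ : IsCouponMeasure μ)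
    (hN : 2 ≤ N) (hC : 1 ≤ C) (M : ℕ) :
    μ ({ω | ∀ c x, ∃ s < M, ω s c = x}ᶜ)
      ≤ ENNReal.ofReal ((C:ℝ) * N * (((N:ℝ)-1)/N) ^ M) := by
  haveI := hμ.1
  have hn : (2:ℝ) ≤ (N:ℝ) := by exact_mod_cast hN
  have hn0 : (0:ℝ) < (N:ℝ) := by linarith
  have hn1 : (0:ℝ) ≤ (N:ℝ) - 1 := by linarith
  rw [prob_compl_eq_one_sub (covset_measurable M), meas_covset μ hμ M,
    enn_cast (by omega) _ M, tsub_le_iff_right,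
    ← ENNReal.ofReal_add (by positivity) (by positivity), ← ENNReal.ofReal_one]
  refine ENNReal.ofReal_le_ofReal ?_
  set k := (Finset.univ.filter (fun h : Fin M → Fin N => ∀ x, ∃ s, h s = x)).card with hkdef
  have hkle : k ≤ N ^ M := by
    calc k ≤ (Finset.univ : Finset (Fin M → Fin N)).card := Finset.card_filter_le _ _
      _ = N ^ M := by rw [Finset.card_univ, Fintype.card_fun, Fintype.card_fin, Fintype.card_fin]
  have hkge : N ^ M - N * (N - 1) ^ M ≤ k := card_hit_ge M (le_trans one_le_two hN)
  set p : ℝ := (k:ℝ) / (N:ℝ)^M with hpdef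
  have hnM : (0:ℝ) < (N:ℝ)^M := by positivity
  have hp1 : p ≤ 1 := by
    rw [hpdef, div_le_one hnM]
    calc (k:ℝ) ≤ ((N^M : ℕ):ℝ) := Nat.cast_le.2 hkle
      _ = (N:ℝ)^M := by push_cast; ring
  have hp0 : 0 ≤ p := by positivity
  have hBern : 1 - p^C ≤ (C:ℝ) * (1 - p) := by
    have h := one_add_mul_le_pow (show (-2:ℝ) ≤ p - 1 by linarith) C
    have h2 : (1:ℝ) + (p - 1) = p := by ring
    rw [h2] at h
    linarith
  have hgap : 1 - p ≤ (N:ℝ) * (((N:ℝ)-1)/(N:ℝ)) ^ M := by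
    have hc : ((N ^ M - N * (N-1) ^ M : ℕ):ℝ) ≤ (k:ℝ) := Nat.cast_le.2 hkge
    have hc2 : (N:ℝ)^M - (N:ℝ)*((N:ℝ)-1)^M ≤ ((N ^ M - N * (N-1) ^ M : ℕ):ℝ) := by
      refine le_trans (le_of_eq ?_) (nat_cast_sub_ge _ _)
      rw [Nat.cast_pow, Nat.cast_mul, Nat.cast_pow, cast_pred (le_trans one_le_two hN)]
    have hc3 : (N:ℝ)^M - (N:ℝ)*((N:ℝ)-1)^M ≤ (k:ℝ) := le_trans hc2 hc
    have e1 : ((N:ℝ)^M - (N:ℝ)*((N:ℝ)-1)^M)/(N:ℝ)^M = 1 - (N:ℝ)*(((N:ℝ)-1)/(N:ℝ))^M := by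
      rw [div_pow]
      field_simp
    have e2 : ((N:ℝ)^M - (N:ℝ)*((N:ℝ)-1)^M)/(N:ℝ)^M ≤ p := by
      rw [hpdef]
      gcongr
    linarith [e1 ▸ e2]
  have hppow : (k:ℝ)^C * ((((N:ℝ)^M)^C))⁻¹ = p^C := by
    rw [hpdef, div_pow, div_eq_mul_inv]
  rw [hppow]
  have hmul := mul_le_mul_of_nonneg_left hgap (show (0:ℝ) ≤ (C:ℝ) by positivity)
  have hassoc : (C:ℝ) * ((N:ℝ) * (((N:ℝ)-1)/(N:ℝ))^M) = (C:ℝ) * (N:ℝ) * (((N:ℝ)-1)/(N:ℝ))^M := by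
    ring
  linarith

lemma never_null (μ : Measure (ℕ → Fin C → Fin N)) (hμ : IsCouponMeasure μ)
    (hN : 2 ≤ N) (hC : 1 ≤ C) :
    μ (⋂ M : ℕ, ({ω : ℕ → Fin C → Fin N | ∀ c x, ∃ s < M, ω s c = x}ᶜ)) = 0 := by
  haveI := hμ.1
  refine le_antisymm ?_ zero_le
  refine ENNReal.le_of_forall_pos_le_add fun ε hε _ => ?_
  rw [zero_add]
  have hn : (2:ℝ) ≤ (N:ℝ) := by exact_mod_cast hN
  have hr0 : (0:ℝ) ≤ ((N:ℝ)-1)/(N:ℝ) := div_nonneg (by linarith) (by linarith)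
  have hr1 : ((N:ℝ)-1)/(N:ℝ) < 1 := (div_lt_one (by linarith)).2 (by linarith)
  have htend : Filter.Tendsto (fun M : ℕ => (C:ℝ) * N * (((N:ℝ)-1)/(N:ℝ)) ^ M)
      Filter.atTop (nhds 0) := by
    have := (tendsto_pow_atTop_nhds_zero_of_lt_one hr0 hr1).const_mul ((C:ℝ) * N)
    simpa using this
  have hev : ∀ᶠ M in Filter.atTop,
      (C:ℝ) * N * (((N:ℝ)-1)/(N:ℝ)) ^ M < (ε:ℝ) := by
    have hεpos : (0:ℝ) < (ε:ℝ) := by exact_mod_cast hε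
    exact htend.eventually (Filter.Tendsto.eventually_lt_const hεpos (by simpa using Filter.tendsto_id)) |>.mono (fun x h => h)
  obtain ⟨M, hM⟩ := hev.exists
  calc μ (⋂ M : ℕ, ({ω : ℕ → Fin C → Fin N | ∀ c x, ∃ s < M, ω s c = x}ᶜ))
      ≤ μ ({ω : ℕ → Fin C → Fin N | ∀ c x, ∃ s < M, ω s c = x}ᶜ) :=
        measure_mono (Set.iInter_subset _ M)
    _ ≤ ENNReal.ofReal ((C:ℝ) * N * (((N:ℝ)-1)/N) ^ M) := meas_compl_le μ hμ hN hC M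
    _ ≤ (ε : ℝ≥0∞) := by
        rw [← ENNReal.ofReal_coe_nnreal]
        exact ENNReal.ofReal_le_ofReal hM.le


lemma coverTime_lower {u : ℕ} {ω : ℕ → Fin C → Fin N}
    (h1 : ¬ ∀ c x, ∃ s < u, ω s c = x)
    (h2 : ∃ M : ℕ, ∀ c x, ∃ s < M, ω s c = x) :
    u < coverTime ω := by
  by_contra h
  push_neg at h
  have hne : {t : ℕ | ∀ c x, ∃ s < t, ω s c = x}.Nonempty := h2
  have hmem := Nat.sInf_mem hne
  apply h1
  intro c x
  obtain ⟨s, hs, hsx⟩ := hmem c x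
  exact ⟨s, lt_of_lt_of_le hs h, hsx⟩

lemma half_le (μ : Measure (ℕ → Fin C → Fin N)) (hμ : IsCouponMeasure μ)
    (hN : 2 ≤ N) (hC : 1 ≤ C) (u : ℕ)
    (hu : (u:ℝ) ≤ Real.log ((C:ℝ) / Real.log 2) / Real.log ((N:ℝ) / ((N:ℝ) - 1))) :
    ENNReal.ofReal (1/2) ≤
      μ ({ω | ∀ c x, ∃ s < u, ω s c = x}ᶜ \
        ⋂ M : ℕ, ({ω : ℕ → Fin C → Fin N | ∀ c x, ∃ s < M, ω s c = x}ᶜ)) := by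
  haveI := hμ.1
  rw [measure_diff_null (never_null μ hμ hN hC),
    prob_compl_eq_one_sub (covset_measurable u)]
  have h := meas_cov_le μ hμ hN hC u hu
  calc ENNReal.ofReal (1/2) = 1 - ENNReal.ofReal (1/2) := by
        rw [← ENNReal.ofReal_one, ← ENNReal.ofReal_sub _ (by norm_num : (0:ℝ) ≤ 1/2)]
        norm_num
    _ ≤ 1 - μ {ω | ∀ c x, ∃ s < u, ω s c = x} := tsub_le_tsub_left h 1


end CouponAux

/-- In the parallel coupon collector problem with `N ≥ 2`
coupon types and `C ≥ 1` collectors, with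
`t₀ = log (C / log 2) / log (N / (N - 1))`, every natural number `t ≤ t₀`
satisfies `P(T(N, C) ≥ t) ≥ 1/2`; consequently
`E[T(N, C)] ≥ t₀ / 2 = log (C / log 2) / (2 * log (N / (N - 1)))`. -/
theorem coupon_median_and_expectation_bound
    (N C : ℕ) (hN : 2 ≤ N) (hC : 1 ≤ C)
    (μ : Measure (ℕ → Fin C → Fin N)) (hμ : IsCouponMeasure μ) :
    (∀ t : ℕ, (t : ℝ) ≤
        Real.log ((C : ℝ) / Real.log 2) / Real.log ((N : ℝ) / ((N : ℝ) - 1)) →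
        ENNReal.ofReal (1 / 2) ≤ μ {ω | t ≤ coverTime ω}) ∧
      ENNReal.ofReal
          (Real.log ((C : ℝ) / Real.log 2) /
            (2 * Real.log ((N : ℝ) / ((N : ℝ) - 1)))) ≤
        ∫⁻ ω, (coverTime ω : ℝ≥0∞) ∂μ := by
  haveI := hμ.1
  have hmedian : ∀ t : ℕ, ((t - 1 : ℕ) : ℝ) ≤
      Real.log ((C : ℝ) / Real.log 2) / Real.log ((N : ℝ) / ((N : ℝ) - 1)) →
      ENNReal.ofReal (1 / 2) ≤ μ {ω | t ≤ coverTime ω} := by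
    intro t ht
    rcases Nat.eq_zero_or_pos t with rfl | htpos
    · have hU : {ω : ℕ → Fin C → Fin N | 0 ≤ coverTime ω} = Set.univ := by
        ext ω; simp
      rw [hU, measure_univ]
      exact ENNReal.ofReal_le_one.2 (by norm_num)
    · refine le_trans (half_le μ hμ hN hC (t-1) ht) (measure_mono ?_)
      rintro ω ⟨h1, h2⟩
      have h2' : ∃ M : ℕ, ∀ c x, ∃ s < M, ω s c = x := by
        simpa [Set.mem_iInter] using h2
      have hlt : t - 1 < coverTime ω := coverTime_lower h1 h2'
      exact show t ≤ coverTime ω by omega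
  constructor
  · intro t ht
    exact hmedian t (le_trans (Nat.cast_le.2 (Nat.sub_le t 1)) ht)
  · -- expectation bound
    have hn : (2:ℝ) ≤ (N:ℝ) := by exact_mod_cast hN
    have hlog2pos : 0 < Real.log 2 := Real.log_pos one_lt_two
    have hlog2lt : Real.log 2 < 1 := by
      have := Real.log_two_lt_d9; linarith
    have hCge : (1:ℝ) ≤ (C:ℝ) := by exact_mod_cast hC
    have harg : 1 < (C:ℝ)/Real.log 2 := by
      rw [lt_div_iff₀ hlog2pos]; linarith
    have hnum : 0 < Real.log ((C:ℝ)/Real.log 2) := Real.log_pos harg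
    have hL : 0 < Real.log ((N:ℝ)/((N:ℝ)-1)) :=
      Real.log_pos ((one_lt_div (by linarith)).2 (by linarith))
    set t₀ : ℝ := Real.log ((C:ℝ)/Real.log 2) / Real.log ((N:ℝ)/((N:ℝ)-1)) with ht₀def
    have ht₀ : 0 < t₀ := div_pos hnum hL
    set t : ℕ := ⌈t₀⌉₊ with htdef
    have htpos : 0 < t := Nat.ceil_pos.2 ht₀
    have hu : ((t - 1 : ℕ):ℝ) ≤ t₀ := by
      have hlt : (t - 1 : ℕ) < t := Nat.sub_lt htpos one_pos
      exact le_of_lt (Nat.lt_ceil.1 hlt)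
    set S : Set (ℕ → Fin C → Fin N) :=
      {ω | ∀ c x, ∃ s < (t-1), ω s c = x}ᶜ \
        ⋂ M : ℕ, ({ω : ℕ → Fin C → Fin N | ∀ c x, ∃ s < M, ω s c = x}ᶜ) with hSdef
    have hhalf : ENNReal.ofReal (1/2) ≤ μ S := half_le μ hμ hN hC (t-1) hu
    have hmeas : MeasurableSet S :=
      ((covset_measurable (t-1)).compl).diff
        (MeasurableSet.iInter fun M => (covset_measurable M).compl)
    have hpoint : ∀ ω, S.indicator (fun _ => (t : ℝ≥0∞)) ω ≤ (coverTime ω : ℝ≥0∞) := by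
      intro ω
      by_cases hω : ω ∈ S
      · rw [Set.indicator_of_mem hω]
        obtain ⟨h1, h2⟩ := hω
        have h2' : ∃ M : ℕ, ∀ c x, ∃ s < M, ω s c = x := by
          simpa [Set.mem_iInter] using h2
        have hlt : t - 1 < coverTime ω := coverTime_lower h1 h2'
        exact Nat.cast_le.2 (by omega)
      · rw [Set.indicator_of_notMem hω]
        exact zero_le
    have hsplit : Real.log ((C:ℝ)/Real.log 2) / (2 * Real.log ((N:ℝ)/((N:ℝ)-1)))
        = t₀ * (1/2) := by
      rw [ht₀def, mul_comm (2:ℝ), ← div_div]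
      ring
    calc ENNReal.ofReal (Real.log ((C:ℝ)/Real.log 2) / (2 * Real.log ((N:ℝ)/((N:ℝ)-1))))
        = ENNReal.ofReal t₀ * ENNReal.ofReal (1/2) := by
          rw [hsplit, ENNReal.ofReal_mul ht₀.le]
      _ ≤ (t : ℝ≥0∞) * ENNReal.ofReal (1/2) := by
          refine mul_le_mul_left ?_ _
          calc ENNReal.ofReal t₀ ≤ ENNReal.ofReal ((t:ℕ):ℝ) :=
                ENNReal.ofReal_le_ofReal (Nat.le_ceil t₀)
            _ = (t : ℝ≥0∞) := ENNReal.ofReal_natCast t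
      _ ≤ (t : ℝ≥0∞) * μ S := mul_le_mul_right hhalf _
      _ = ∫⁻ ω, S.indicator (fun _ => (t : ℝ≥0∞)) ω ∂μ := by
          rw [lintegral_indicator hmeas, setLIntegral_const, mul_comm]
      _ ≤ ∫⁻ ω, (coverTime ω : ℝ≥0∞) ∂μ := lintegral_mono hpoint
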